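/- Let k be a field, X a commutative k-algebra, and (e_T)_{T∈I} a finite family of pairwise orthogonal idempotents in X summing to 1. Let β : I → I' be a map into a set I', and for S ∈ I' set f_S = Σ_{T∈I, β(T)=S} e_T. Let J ∈ X and c : I → k satisfy J·e_T = c(T)·e_T for all T ∈ I, and assume that c(T) ≠ c(T') whenever T ≠ T' and β(T) = β(T'). Then for every T ∈ I, e_T = f_{β(T)} · Π_{T'∈I, T'≠T, β(T')=β(T)} (c(T) − c(T'))⁻¹·(J − c(T')·1). -/

import Mathlib

/-- The recursion `e_T = f_{β(T)} · P_T(J)`: with `f S = ∑_{β T = S} e T`,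
`J * e T = c T • e T`, and `c` separating on fibers of `β`, one has
`e T = f (β T) * ∏_{T' ≠ T, β T' = β T} (c T − c T')⁻¹ • (J − c T' • 1)`. -/
theorem stmt_8 {k : Type*} [Field k] {X : Type*} [CommRing X] [Algebra k X]
    {I : Type*} [Fintype I] [DecidableEq I] {I' : Type*} [DecidableEq I']
    (e : I → X)
    (horth : ∀ T T' : I, T ≠ T' → e T * e T' = 0)
    (hidem : ∀ T : I, e T * e T = e T)
    (hsum : ∑ T : I, e T = 1)
    (β : I → I') (J : X) (c : I → k)
    (hJ : ∀ T : I, J * e T = c T • e T)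
    (hsep : ∀ T T' : I, T ≠ T' → β T = β T' → c T ≠ c T')
    (T : I) :
    e T = (∑ T' ∈ Finset.univ.filter fun T' : I => β T' = β T, e T') *
        ∏ T' ∈ Finset.univ.filter fun T' : I => T' ≠ T ∧ β T' = β T,
          (c T - c T')⁻¹ • (J - c T' • (1 : X)) := by
  have aux : ∀ (s : Finset I) (S : I),
      (∏ T' ∈ s, (c T - c T')⁻¹ • (J - c T' • (1 : X))) * e S =
        (∏ T' ∈ s, (c T - c T')⁻¹ * (c S - c T')) • e S := by
    intro s S
    induction s using Finset.induction_on with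
    | empty => simp
    | insert _ _ hns ih =>
      rename_i a s
      rw [Finset.prod_insert hns, Finset.prod_insert hns, mul_assoc, ih,
        smul_mul_assoc, mul_smul_comm, sub_mul, hJ S, smul_mul_assoc, one_mul,
        ← sub_smul, smul_smul, smul_smul]
      congr 1
      ring
  rw [Finset.sum_mul]
  rw [Finset.sum_eq_single T]
  · rw [mul_comm, aux]
    have : (∏ T' ∈ Finset.univ.filter fun T' : I => T' ≠ T ∧ β T' = β T,
        (c T - c T')⁻¹ * (c T - c T')) = 1 := by
      apply Finset.prod_eq_one
      intro x hx
      simp only [Finset.mem_filter] at hx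
      exact inv_mul_cancel₀ (sub_ne_zero.2 (hsep T x (Ne.symm hx.2.1) hx.2.2.symm))
    rw [this, one_smul]
  · intro S hS hST
    simp only [Finset.mem_filter] at hS
    rw [mul_comm, aux]
    have : (∏ T' ∈ Finset.univ.filter fun T' : I => T' ≠ T ∧ β T' = β T,
        (c T - c T')⁻¹ * (c S - c T')) = 0 := by
      apply Finset.prod_eq_zero (i := S)
      · simp [hST, hS.2]
      · simp
    rw [this, zero_smul]
  · intro h
    simp at h
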